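/- Let V ⊆ Ṽ be real vector spaces with dim Ṽ = dim V + 1, let B̃ be a symmetric bilinear form on Ṽ with restriction B to V, and suppose Rad(B̃) = 0 while dim Rad(B) = 1. Then any isometry w̃ of (Ṽ,B̃) that fixes V pointwise is the identity on Ṽ. -/

import Mathlib

/-- Let `V ⊆ W` with `dim W = dim V + 1`, let `B` be a symmetric bilinear form on `W`
with `Rad(B) = 0` whose restriction to `V` has one-dimensional radical. Then any
isometry of `(W, B)` fixing `V` pointwise is the identity. -/
theorem stmt_14 {W : Type*} [AddCommGroup W] [Module ℝ W] [FiniteDimensional ℝ W]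
    (V : Submodule ℝ W)
    (hdim : Module.finrank ℝ W = Module.finrank ℝ V + 1)
    (B : LinearMap.BilinForm ℝ W) (hsym : ∀ x y, B x y = B y x)
    (hnd : ∀ x : W, (∀ y, B x y = 0) → x = 0)
    (hrad : ∃ v ∈ V, v ≠ 0 ∧ (∀ u ∈ V, B v u = 0) ∧
      ∀ u ∈ V, (∀ u' ∈ V, B u u' = 0) → ∃ c : ℝ, u = c • v)
    (w : W ≃ₗ[ℝ] W) (hw : ∀ x y, B (w x) (w y) = B x y)
    (hfix : ∀ x ∈ V, w x = x) :
    ∀ x : W, w x = x := by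
  obtain ⟨v, hvV, hv0, hvperp, -⟩ := hrad
  have hrefl : B.IsRefl := fun x y h => by rw [hsym]; exact h
  have hndeg : B.Nondegenerate := ⟨fun x hx => hnd x hx, fun y hy => hnd y fun x => by rw [hsym]; exact hy x⟩
  -- the orthogonal complement of V is spanned by v
  have hvO : v ∈ B.orthogonal V := fun n hn => by
    show B n v = 0
    rw [hsym]; exact hvperp n hn
  have hOdim : Module.finrank ℝ (B.orthogonal V) = 1 := by
    rw [LinearMap.BilinForm.finrank_orthogonal hndeg, hdim]
    omega
  have hspan : Submodule.span ℝ {v} = B.orthogonal V := by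
    apply Submodule.eq_of_le_of_finrank_le
    · rwa [Submodule.span_singleton_le_iff_mem]
    · rw [hOdim, finrank_span_singleton hv0]
  -- main step: w x - x is a multiple of v
  have key : ∀ x : W, ∃ c : ℝ, w x - x = c • v := by
    intro x
    have hmem : w x - x ∈ B.orthogonal V := by
      intro n hn
      show B n (w x - x) = 0
      have : B n (w x) = B n x := by
        conv_lhs => rw [← hfix n hn, hw]
      simp [this]
    rw [← hspan, Submodule.mem_span_singleton] at hmem
    obtain ⟨c, hc⟩ := hmem
    exact ⟨c, hc.symm⟩
  have hvv : B v v = 0 := hvperp v hvV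
  -- choose y₀ with B v y₀ ≠ 0
  obtain ⟨y₀, hy₀⟩ : ∃ y₀, B v y₀ ≠ 0 := by
    by_contra h
    push_neg at h
    exact hv0 (hnd v h)
  -- w y₀ = y₀
  obtain ⟨c₀, hc₀⟩ := key y₀
  have hwy₀ : w y₀ = y₀ := by
    have h1 : B (w y₀) (w y₀) = B y₀ y₀ := hw y₀ y₀
    have h2 : w y₀ = y₀ + c₀ • v := by rw [← hc₀]; abel
    rw [h2] at h1
    simp only [map_add, map_smul, LinearMap.add_apply, LinearMap.smul_apply,
      smul_eq_mul] at h1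
    rw [hvv, hsym y₀ v] at h1
    have hc0 : c₀ = 0 := by
      have : (2 * c₀) * B v y₀ = 0 := by ring_nf; ring_nf at h1; linarith
      rcases mul_eq_zero.mp this with h | h
      · linarith
      · exact absurd h hy₀
    rw [h2, hc0, zero_smul, add_zero]
  -- conclude for arbitrary x
  intro x
  obtain ⟨c, hc⟩ := key x
  have h1 : B (w x) (w y₀) = B x y₀ := hw x y₀
  have h2 : w x = x + c • v := by rw [← hc]; abel
  rw [h2, hwy₀] at h1
  simp only [map_add, map_smul, LinearMap.add_apply, LinearMap.smul_apply,
    smul_eq_mul] at h1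
  have hc0 : c = 0 := by
    have : c * B v y₀ = 0 := by linarith
    rcases mul_eq_zero.mp this with h | h
    · exact h
    · exact absurd h hy₀
  rw [h2, hc0, zero_smul, add_zero]
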